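/- Let α ∈ [0,1)∖{1/2} and define f : (0,∞)∖{1} → ℝ by f(t) = |t−1|^{4α−2} + (t+1)^{4α−2} − 2(t²+1)·(t^{2α}−1)²/(t²−1)². There exists C > 0, depending only on α, such that: f(t) ≤ C·t^{2α} for all 0 < t < 1/2; f(t) ≤ C·|t−1|^{4α−2} for all t ∈ [1/2,2] with t ≠ 1; and f(t) ≤ C·t^{2α−2} for all t > 2. -/

import Mathlib

open Real Set Filter Topology

/-- The function
`f(t) = |t−1|^{4α−2} + (t+1)^{4α−2} − 2(t²+1)(t^{2α}−1)²/(t²−1)²` from the Appendix. -/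
noncomputable def ffun (α t : ℝ) : ℝ :=
  |t - 1| ^ (4 * α - 2) + (t + 1) ^ (4 * α - 2) -
    2 * (t ^ 2 + 1) * (t ^ (2 * α) - 1) ^ 2 / (t ^ 2 - 1) ^ 2

lemma quadbound {p : ℝ} (hp1 : -2 ≤ p) (hp2 : p ≤ 2) {t : ℝ} (ht0 : 0 ≤ t) (ht : t ≤ 1/2) :
    (1 - t) ^ p + (1 + t) ^ p ≤ 2 + 96 * t ^ 2 := by
  set ψ : ℝ → ℝ := fun x => 48 * x ^ 2 - x ^ p with hψ
  have hconv : ConvexOn ℝ (Icc (1/2 : ℝ) (3/2)) ψ := by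
    apply convexOn_of_hasDerivWithinAt2_nonneg (f' := fun x => 96 * x - p * x ^ (p - 1))
      (f'' := fun x => 96 - p * (p - 1) * x ^ (p - 2)) (convex_Icc _ _)
    · apply ContinuousOn.sub (by fun_prop)
      intro x hx
      exact (Real.continuousAt_rpow_const x p (Or.inl (by rcases hx with ⟨h1, _⟩; positivity))).continuousWithinAt
    · intro x hx
      rw [interior_Icc] at hx
      have hx0 : x ≠ 0 := by rcases hx with ⟨h1, _⟩; positivity
      have h1 : HasDerivAt ψ (96 * x - p * x ^ (p - 1)) x := by
        have ha : HasDerivAt (fun x : ℝ => 48 * x ^ 2) (48 * (2 * x)) x := by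
          simpa using (hasDerivAt_pow 2 x).const_mul 48
        have hb : HasDerivAt (fun x : ℝ => x ^ p) (p * x ^ (p - 1)) x :=
          Real.hasDerivAt_rpow_const (Or.inl hx0)
        have := ha.sub hb
        exact this.congr_deriv (by ring)
      exact h1.hasDerivWithinAt
    · intro x hx
      rw [interior_Icc] at hx
      have hx0 : x ≠ 0 := by rcases hx with ⟨h1, _⟩; positivity
      have ha : HasDerivAt (fun x : ℝ => 96 * x) 96 x := by
        simpa using (hasDerivAt_id x).const_mul 96
      have hb : HasDerivAt (fun x : ℝ => x ^ (p - 1)) ((p - 1) * x ^ (p - 1 - 1)) x :=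
        Real.hasDerivAt_rpow_const (Or.inl hx0)
      have := ha.sub (hb.const_mul p)
      have e : 96 - p * ((p - 1) * x ^ (p - 1 - 1)) = 96 - p * (p - 1) * x ^ (p - 2) := by
        rw [show p - 2 = p - 1 - 1 by ring]
        ring
      exact (this.congr_deriv e).hasDerivWithinAt
    · intro x hx
      rw [interior_Icc] at hx
      obtain ⟨h1, h2⟩ := hx
      have hx0 : (0:ℝ) < x := by linarith
      have hb1 : x ^ (p - 2) ≤ (1/2 : ℝ) ^ (p - 2) :=
        Real.rpow_le_rpow_of_nonpos (by norm_num) h1.le (by linarith)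
      have hb2 : (1/2 : ℝ) ^ (p - 2) ≤ (1/2 : ℝ) ^ (-4 : ℝ) :=
        Real.rpow_le_rpow_of_exponent_ge (by norm_num) (by norm_num) (by linarith)
      have hb3 : (1/2 : ℝ) ^ (-4 : ℝ) = 16 := by
        rw [show (-4 : ℝ) = ((-4 : ℤ) : ℝ) by norm_num, Real.rpow_intCast]
        norm_num
      have hxp : (0:ℝ) < x ^ (p - 2) := Real.rpow_pos_of_pos hx0 _
      nlinarith [sq_nonneg (p*(p-1)), sq_nonneg p]
  have hm1 : (1 - t) ∈ Icc (1/2 : ℝ) (3/2) := by constructor <;> linarith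
  have hm2 : (1 + t) ∈ Icc (1/2 : ℝ) (3/2) := by constructor <;> linarith
  have := hconv.2 hm1 hm2 (by norm_num : (0:ℝ) ≤ 1/2) (by norm_num : (0:ℝ) ≤ 1/2) (by norm_num)
  simp only [smul_eq_mul] at this
  have hmid : (1/2 : ℝ) * (1 - t) + (1/2 : ℝ) * (1 + t) = 1 := by ring
  rw [hmid] at this
  have h1p : (1:ℝ) ^ p = 1 := Real.one_rpow p
  simp only [hψ] at this
  rw [h1p] at this
  nlinarith [this]

lemma case1 {α : ℝ} (hα0 : 0 ≤ α) (hα1 : α < 1) {t : ℝ} (ht0 : 0 < t) (ht : t < 1/2) :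
    ffun α t ≤ 100 * t ^ (2 * α) := by
  have habs : |t - 1| = 1 - t := by rw [abs_of_neg (by linarith)]; ring
  have hP : |t - 1| ^ (4*α-2) + (t + 1) ^ (4*α-2) ≤ 2 + 96 * t ^ 2 := by
    rw [habs, show t + 1 = 1 + t by ring]
    exact quadbound (p := 4*α-2) (by linarith) (by linarith) ht0.le (by linarith)
  set u := t ^ (2 * α) with hu
  have hu0 : 0 < u := Real.rpow_pos_of_pos ht0 _
  have hu1 : u ≤ 1 := Real.rpow_le_one ht0.le (by linarith) (by linarith)
  have htsq : t ^ (2:ℝ) ≤ u := Real.rpow_le_rpow_of_exponent_ge ht0 (by linarith) (by linarith)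
  have ht2 : t ^ (2:ℝ) = t ^ 2 := by rw [Real.rpow_two]
  rw [ht2] at htsq
  have hT : 2 - 4 * u ≤ 2 * (t ^ 2 + 1) * (u - 1) ^ 2 / (t ^ 2 - 1) ^ 2 := by
    have hden : (0:ℝ) < (t ^ 2 - 1) ^ 2 := by nlinarith
    have key : 2 * (1 - u) ^ 2 ≤ 2 * (t ^ 2 + 1) * (u - 1) ^ 2 / (t ^ 2 - 1) ^ 2 := by
      rw [le_div_iff₀ hden]
      have h3 : (0:ℝ) ≤ t^2 * (3 - t^2) := by nlinarith
      nlinarith [mul_nonneg (sq_nonneg (u - 1)) h3]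
    nlinarith [key]
  unfold ffun
  rw [hu] at hT ⊢
  have : |t - 1| ^ (4*α-2) + (t + 1) ^ (4*α-2) - 2 * (t ^ 2 + 1) * (t ^ (2*α) - 1) ^ 2 / (t ^ 2 - 1) ^ 2
      ≤ (2 + 96 * t ^ 2) - (2 - 4 * t ^ (2*α)) := by
    have := hT
    linarith [hP]
  calc _ ≤ (2 + 96 * t ^ 2) - (2 - 4 * t ^ (2*α)) := this
    _ = 96 * t ^ 2 + 4 * t ^ (2*α) := by ring
    _ ≤ 100 * t ^ (2*α) := by nlinarith [htsq]

lemma ffun_inv (α : ℝ) {t : ℝ} (ht : 1 < t) :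
    ffun α t = t ^ (4 * α - 2) * ffun α t⁻¹ := by
  have ht0 : (0:ℝ) < t := by linarith
  have htne : t ≠ 0 := ht0.ne'
  have hs0 : (0:ℝ) < t⁻¹ := by positivity
  have hs1 : t⁻¹ < 1 := by rw [inv_lt_one_iff₀]; right; exact ht
  have ha0 : (0:ℝ) < t ^ (2 * α) := Real.rpow_pos_of_pos ht0 _
  have e1 : t ^ (4 * α - 2) * |t⁻¹ - 1| ^ (4 * α - 2) = |t - 1| ^ (4 * α - 2) := by
    rw [abs_of_neg (by linarith), abs_of_pos (by linarith)]
    rw [← Real.mul_rpow ht0.le (by linarith)]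
    congr 1
    field_simp
    ring
  have e2 : t ^ (4 * α - 2) * (t⁻¹ + 1) ^ (4 * α - 2) = (t + 1) ^ (4 * α - 2) := by
    rw [← Real.mul_rpow ht0.le (by positivity)]
    congr 1
    field_simp
    ring
  have hpa : t ^ (4 * α - 2) = (t ^ (2 * α)) ^ 2 / t ^ 2 := by
    rw [show 4 * α - 2 = 2 * α * 2 - 2 by ring, Real.rpow_sub ht0,
      Real.rpow_mul ht0.le, Real.rpow_two, Real.rpow_two]
  have hsa : (t⁻¹) ^ (2 * α) = (t ^ (2 * α))⁻¹ := Real.inv_rpow ht0.le _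
  have hden1 : t ^ 2 - 1 ≠ 0 := by nlinarith
  have hden2 : (t⁻¹) ^ 2 - 1 ≠ 0 := by
    have : (t⁻¹) ^ 2 < 1 := by nlinarith
    linarith
  have e3 : t ^ (4 * α - 2) * (2 * ((t⁻¹) ^ 2 + 1) * ((t⁻¹) ^ (2 * α) - 1) ^ 2 / ((t⁻¹) ^ 2 - 1) ^ 2)
      = 2 * (t ^ 2 + 1) * (t ^ (2 * α) - 1) ^ 2 / (t ^ 2 - 1) ^ 2 := by
    rw [hpa, hsa]
    have h4 : (1:ℝ) - t^2 ≠ 0 := by intro h; apply hden1; linarith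
    field_simp [htne, ha0.ne', hden1]
    ring
  unfold ffun
  linear_combination -e1 - e2 + e3

lemma case3 {α : ℝ} (hα0 : 0 ≤ α) (hα1 : α < 1) {t : ℝ} (ht : 2 < t) :
    ffun α t ≤ 100 * t ^ (2 * α - 2) := by
  have ht1 : (1:ℝ) < t := by linarith
  have ht0 : (0:ℝ) < t := by linarith
  have hs0 : (0:ℝ) < t⁻¹ := by positivity
  have hs12 : t⁻¹ < 1/2 := by
    rw [inv_eq_one_div, div_lt_div_iff₀ ht0 (by norm_num)]
    linarith
  have h := case1 hα0 hα1 hs0 hs12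
  rw [ffun_inv α ht1]
  have hpos : (0:ℝ) < t ^ (4 * α - 2) := Real.rpow_pos_of_pos ht0 _
  have hkey : t ^ (4 * α - 2) * (t⁻¹) ^ (2 * α) = t ^ (2 * α - 2) := by
    rw [Real.inv_rpow ht0.le, ← Real.rpow_neg ht0.le, ← Real.rpow_add ht0]
    congr 1
    ring
  calc t ^ (4 * α - 2) * ffun α t⁻¹
      ≤ t ^ (4 * α - 2) * (100 * (t⁻¹) ^ (2 * α)) :=
        mul_le_mul_of_nonneg_left h hpos.le
    _ = 100 * (t ^ (4 * α - 2) * (t⁻¹) ^ (2 * α)) := by ring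
    _ = 100 * t ^ (2 * α - 2) := by rw [hkey]

lemma two_rpow_lt {x : ℝ} (h0 : 0 < x) (h1 : x < 1) : (2:ℝ) ^ x < 1 + x := by
  have hlog : (0:ℝ) < Real.log 2 := Real.log_pos (by norm_num)
  have := strictConvexOn_exp.2 (mem_univ (0:ℝ)) (mem_univ (Real.log 2))
    (ne_of_lt hlog) (by linarith : (0:ℝ) < 1 - x) h0 (by ring)
  simp only [smul_eq_mul, mul_zero, zero_add, Real.exp_zero, Real.exp_log (by norm_num : (0:ℝ) < 2)] at this
  rw [Real.rpow_def_of_pos (by norm_num : (0:ℝ) < 2)]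
  calc Real.exp (Real.log 2 * x) = Real.exp (x * Real.log 2) := by rw [mul_comm]
    _ < (1 - x) * 1 + x * 2 := by simpa using this
    _ = 1 + x := by ring

lemma gap_pos {α : ℝ} (h0 : 1/2 < α) (h1 : α < 1) : (2:ℝ) ^ (4 * α - 2) < 4 * α ^ 2 := by
  set x := 2 * α - 1 with hx
  have hx0 : 0 < x := by simp [hx]; linarith
  have hx1 : x < 1 := by simp [hx]; linarith
  have key := two_rpow_lt hx0 hx1
  have h2x : (2:ℝ) ^ (4 * α - 2) = ((2:ℝ) ^ x) ^ 2 := by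
    rw [show (4 * α - 2) = x * 2 by rw [hx]; ring,
      Real.rpow_mul (by norm_num : (0:ℝ) ≤ 2), Real.rpow_two]
  rw [h2x]
  have hp : (0:ℝ) < (2:ℝ) ^ x := Real.rpow_pos_of_pos (by norm_num) _
  have : 4 * α ^ 2 = (1 + x) ^ 2 := by rw [hx]; ring
  rw [this]
  nlinarith [key, hp]

lemma ffun_tendsto (α : ℝ) (hp : 0 < 4 * α - 2) :
    Tendsto (ffun α) (𝓝[≠] (1:ℝ)) (𝓝 ((2:ℝ) ^ (4 * α - 2) - 4 * α ^ 2)) := by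
  have t1 : Tendsto (fun t : ℝ => |t - 1| ^ (4 * α - 2)) (𝓝[≠] (1:ℝ)) (𝓝 0) := by
    have hc : ContinuousAt (fun x : ℝ => x ^ (4 * α - 2)) 0 :=
      Real.continuousAt_rpow_const 0 _ (Or.inr hp.le)
    have habs : Tendsto (fun t : ℝ => |t - 1|) (𝓝 (1:ℝ)) (𝓝 0) := by
      have : Continuous fun t : ℝ => |t - 1| := by fun_prop
      simpa using this.tendsto 1
    have := hc.tendsto.comp habs
    rw [Real.zero_rpow (ne_of_gt hp)] at this
    exact this.mono_left nhdsWithin_le_nhds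
  have t2 : Tendsto (fun t : ℝ => (t + 1) ^ (4 * α - 2)) (𝓝[≠] (1:ℝ))
      (𝓝 ((2:ℝ) ^ (4 * α - 2))) := by
    have hc : ContinuousAt (fun t : ℝ => (t + 1) ^ (4 * α - 2)) 1 :=
      ContinuousAt.rpow_const (by fun_prop) (Or.inl (by norm_num))
    have := hc.tendsto
    norm_num at this
    exact this.mono_left nhdsWithin_le_nhds
  have hd : HasDerivAt (fun x : ℝ => x ^ (2 * α)) (2 * α) 1 := by
    have := Real.hasDerivAt_rpow_const (x := (1:ℝ)) (p := 2 * α) (Or.inl one_ne_zero)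
    simpa using this
  have hslope : Tendsto (fun t : ℝ => (t ^ (2 * α) - 1) / (t - 1)) (𝓝[≠] (1:ℝ)) (𝓝 (2 * α)) := by
    have := hasDerivAt_iff_tendsto_slope.mp hd
    apply this.congr
    intro t
    simp [slope_def_field, Real.one_rpow]
  have t3 : Tendsto (fun t : ℝ => 2 * (t ^ 2 + 1) / (t + 1) ^ 2 * ((t ^ (2 * α) - 1) / (t - 1)) ^ 2)
      (𝓝[≠] (1:ℝ)) (𝓝 (4 * α ^ 2)) := by
    have h1 : Tendsto (fun t : ℝ => 2 * (t ^ 2 + 1) / (t + 1) ^ 2) (𝓝[≠] (1:ℝ)) (𝓝 1) := by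
      have hc : ContinuousAt (fun t : ℝ => 2 * (t ^ 2 + 1) / (t + 1) ^ 2) 1 := by
        apply ContinuousAt.div (by fun_prop) (by fun_prop) (by norm_num)
      have := hc.tendsto
      norm_num at this
      exact this.mono_left nhdsWithin_le_nhds
    have h2 := (hslope.mul hslope)
    have := h1.mul h2
    norm_num at this ⊢
    convert this using 2 with t
    · ring
    · ring
  have := (t1.add t2).sub t3
  norm_num at this
  apply this.congr'
  filter_upwards [self_mem_nhdsWithin,
    eventually_nhdsWithin_of_eventually_nhds
      (eventually_abs_sub_lt (1:ℝ) (by norm_num : (0:ℝ) < 1/2))] with t ht1 ht2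
  have htne : t - 1 ≠ 0 := sub_ne_zero.mpr ht1
  have htp : t + 1 ≠ 0 := by
    rw [abs_sub_lt_iff] at ht2; intro h; linarith [ht2.1, ht2.2]
  unfold ffun
  have : 2 * (t ^ 2 + 1) * (t ^ (2 * α) - 1) ^ 2 / (t ^ 2 - 1) ^ 2
      = 2 * (t ^ 2 + 1) / (t + 1) ^ 2 * ((t ^ (2 * α) - 1) / (t - 1)) ^ 2 := by
    have h12 : t ^ 2 - 1 ≠ 0 := by
      intro h
      rcases mul_eq_zero.mp (by nlinarith : (t-1)*(t+1) = 0) with h' | h'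
      · exact htne h'
      · exact htp h'
    rw [div_pow, div_mul_div_comm, div_eq_div_iff (pow_ne_zero 2 h12) (by positivity)]
    ring
  rw [this]

/-- Pointwise bounds for `f`: `f(t) ≤ C·t^{2α}` for `t < 1/2`,
`f(t) ≤ C·|t−1|^{4α−2}` for `t ∈ [1/2,2]∖{1}`, and `f(t) ≤ C·t^{2α−2}` for `t > 2`. -/
theorem stmt17 (α : ℝ) (hα0 : 0 ≤ α) (hα1 : α < 1) (hα : α ≠ 1 / 2) :
    ∃ C > (0 : ℝ),
      (∀ t : ℝ, 0 < t → t < 1 / 2 → ffun α t ≤ C * t ^ (2 * α)) ∧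
      (∀ t : ℝ, 1 / 2 ≤ t → t ≤ 2 → t ≠ 1 →
        ffun α t ≤ C * |t - 1| ^ (4 * α - 2)) ∧
      (∀ t : ℝ, 2 < t → ffun α t ≤ C * t ^ (2 * α - 2)) := by
  rcases lt_or_gt_of_ne hα with hlt | hgt
  · refine ⟨100, by norm_num, ?_, ?_, ?_⟩
    · intro t ht0 ht; exact case1 hα0 hα1 ht0 ht
    · intro t h1 h2 hne
      have hp : 4 * α - 2 < 0 := by linarith
      have habs0 : 0 < |t - 1| := abs_pos.mpr (sub_ne_zero.mpr hne)
      have habs1 : |t - 1| ≤ 1 := abs_le.mpr ⟨by linarith, by linarith⟩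
      have hA : (t + 1) ^ (4 * α - 2) ≤ 1 :=
        Real.rpow_le_one_of_one_le_of_nonpos (by linarith) hp.le
      have hB : 1 ≤ |t - 1| ^ (4 * α - 2) :=
        Real.one_le_rpow_of_pos_of_le_one_of_nonpos habs0 habs1 hp.le
      have hT : 0 ≤ 2 * (t ^ 2 + 1) * (t ^ (2 * α) - 1) ^ 2 / (t ^ 2 - 1) ^ 2 := by positivity
      unfold ffun
      linarith
    · intro t ht; exact case3 hα0 hα1 ht
  · have hp : 0 < 4 * α - 2 := by linarith
    have hgap : (2:ℝ) ^ (4 * α - 2) - 4 * α ^ 2 < 0 := by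
      have := gap_pos hgt hα1; linarith
    have hneg := (ffun_tendsto α hp).eventually_lt_const hgap
    rw [eventually_nhdsWithin_iff, Metric.eventually_nhds_iff] at hneg
    obtain ⟨ε, hε, hball⟩ := hneg
    have hηp : (0:ℝ) < (min ε 1) ^ (4 * α - 2) := Real.rpow_pos_of_pos (lt_min hε one_pos) _
    refine ⟨100 + 10 / (min ε 1) ^ (4 * α - 2), by positivity, ?_, ?_, ?_⟩
    · intro t ht0 ht
      have h := case1 hα0 hα1 ht0 ht
      have hX : 0 ≤ t ^ (2 * α) := (Real.rpow_pos_of_pos ht0 _).le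
      nlinarith [div_pos (by norm_num : (0:ℝ) < 10) hηp]
    · intro t h1 h2 hne
      have habs0 : 0 < |t - 1| := abs_pos.mpr (sub_ne_zero.mpr hne)
      have hXpos : 0 < |t - 1| ^ (4 * α - 2) := Real.rpow_pos_of_pos habs0 _
      by_cases hd : |t - 1| < ε
      · have hmem : t ∈ ({1}ᶜ : Set ℝ) := by simpa using hne
        have hlt0 : ffun α t < 0 := hball (by rw [Real.dist_eq]; exact hd) hmem
        have : (0:ℝ) ≤ (100 + 10 / (min ε 1) ^ (4 * α - 2)) * |t - 1| ^ (4 * α - 2) := by positivity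
        linarith
      · push_neg at hd
        have hηle : min ε 1 ≤ |t - 1| := le_trans (min_le_left _ _) hd
        have habs1 : |t - 1| ≤ 1 := abs_le.mpr ⟨by linarith, by linarith⟩
        have hfb : ffun α t ≤ 10 := by
          have hA : |t - 1| ^ (4 * α - 2) ≤ 1 :=
            Real.rpow_le_one habs0.le habs1 hp.le
          have hB : (t + 1) ^ (4 * α - 2) ≤ 9 := by
            calc (t + 1) ^ (4 * α - 2) ≤ (3:ℝ) ^ (4 * α - 2) :=
                  Real.rpow_le_rpow (by linarith) (by linarith) hp.le
              _ ≤ (3:ℝ) ^ (2:ℝ) :=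
                  Real.rpow_le_rpow_of_exponent_le (by norm_num) (by linarith)
              _ = 9 := by rw [Real.rpow_two]; norm_num
          have hT : 0 ≤ 2 * (t ^ 2 + 1) * (t ^ (2 * α) - 1) ^ 2 / (t ^ 2 - 1) ^ 2 := by positivity
          unfold ffun
          linarith
        have hab : (min ε 1) ^ (4 * α - 2) ≤ |t - 1| ^ (4 * α - 2) :=
          Real.rpow_le_rpow (le_of_lt (lt_min hε one_pos)) hηle hp.le
        calc ffun α t ≤ 10 := hfb
          _ = (10 / (min ε 1) ^ (4 * α - 2)) * (min ε 1) ^ (4 * α - 2) := by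
              field_simp
          _ ≤ (10 / (min ε 1) ^ (4 * α - 2)) * |t - 1| ^ (4 * α - 2) :=
              mul_le_mul_of_nonneg_left hab (by positivity)
          _ ≤ (100 + 10 / (min ε 1) ^ (4 * α - 2)) * |t - 1| ^ (4 * α - 2) := by
              nlinarith [hXpos]
    · intro t ht
      have h := case3 hα0 hα1 ht
      have hX : 0 ≤ t ^ (2 * α - 2) := (Real.rpow_pos_of_pos (by linarith) _).le
      nlinarith [div_pos (by norm_num : (0:ℝ) < 10) hηp]
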